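/- With notation as above, for s ≥ 0 the induced boost action on B in direction 𝐥 maps every truncated pointed convex cone K with apex at the origin 0 ∈ B and convex boundary set L ⊂ S² containing 𝐥 into itself: the apex 0 is moved to tanh(s)·𝐥 ∈ K, and each boundary point of L is moved along a great circle towards 𝐥, so that the transformed cone is contained in K. -/

import Mathlib

noncomputable section

open scoped RealInnerProductSpace

abbrev E3 := EuclideanSpace ℝ (Fin 3)

def segCone (a : E3) (L : Set E3) : Set E3 :=
  {x | ∃ l ∈ L, ∃ t ∈ Set.Ioo (0 : ℝ) 1, x = a + t • (l - a)}

def IsTruncCone (K : Set E3) : Prop :=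
  IsOpen K ∧ Convex ℝ K ∧
    ∃ a : E3, ‖a‖ < 1 ∧ ∃ L : Set E3, (∀ l ∈ L, ‖l‖ = 1) ∧ K = segCone a L

/-- The induced boost action on the open unit ball in the Beltrami–Klein model. -/
def boostMap (s : ℝ) (l : E3) (v : E3) : E3 :=
  (Real.cosh s + Real.sinh s * ⟪v, l⟫)⁻¹ •
    ((Real.sinh s + Real.cosh s * ⟪v, l⟫) • l + (v - ⟪v, l⟫ • l))

lemma mem_segCone_zero {L : Set E3} {m : E3} (hm : m ∈ L) {t : ℝ}
    (ht : t ∈ Set.Ioo (0 : ℝ) 1) : t • m ∈ segCone 0 L :=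
  ⟨m, hm, t, ht, by simp⟩

lemma zero_not_mem_segCone {L : Set E3} (hL : ∀ m ∈ L, ‖m‖ = 1) :
    (0 : E3) ∉ segCone 0 L := by
  rintro ⟨m, hm, t, ht, h0⟩
  have : ‖(0 : E3)‖ = ‖t • m‖ := by rw [h0]; simp
  rw [norm_smul, hL m hm, norm_zero, Real.norm_eq_abs, abs_of_pos ht.1] at this
  simp at this; linarith [ht.1]

set_option maxHeartbeats 1000000 in
lemma boost_mem (s : ℝ) (hs : 0 ≤ s) (l : E3) (hl : ‖l‖ = 1)
    (L : Set E3) (hL : ∀ m ∈ L, ‖m‖ = 1) (hlL : l ∈ L)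
    (hconv : Convex ℝ (segCone 0 L)) {m : E3} (hm : m ∈ L) {t : ℝ}
    (ht : t ∈ Set.Ioo (0 : ℝ) 1) : boostMap s l (t • m) ∈ segCone 0 L := by
  obtain ⟨ht0, ht1⟩ := ht
  set S := Real.sinh s with hSdef
  set C := Real.cosh s with hCdef
  have hm1 : ‖m‖ = 1 := hL m hm
  set c : ℝ := ⟪m, l⟫ with hcdef
  have hc : |c| ≤ 1 := by
    have := abs_real_inner_le_norm m l
    rwa [hm1, hl, one_mul] at this
  have hc1 := (abs_le.mp hc).1
  have hc1' := (abs_le.mp hc).2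
  have hS : 0 ≤ S := Real.sinh_nonneg_iff.mpr hs
  have hC : 1 ≤ C := Real.one_le_cosh s
  have hCS : S < C := Real.sinh_lt_cosh s
  have hCS1 : C - S ≤ 1 := by
    rw [hCdef, hSdef, Real.cosh_sub_sinh]
    exact Real.exp_le_one_iff.mpr (by linarith)
  have hsq : C ^ 2 = S ^ 2 + 1 := Real.cosh_sq s
  have hinner : ⟪t • m, l⟫ = t * c := by rw [real_inner_smul_left]
  set D : ℝ := C + S * (t * c) with hDdef
  have hD : 0 < D := by
    nlinarith [mul_le_mul_of_nonneg_left hc1 (mul_nonneg hS ht0.le),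
      mul_le_of_le_one_right hS ht1.le]
  have hDne : D ≠ 0 := ne_of_gt hD
  set A : ℝ := S + (C - 1) * (t * c) with hAdef
  have hA : 0 ≤ A := by
    nlinarith [mul_le_mul_of_nonneg_left hc1
        (mul_nonneg (by linarith : (0:ℝ) ≤ C - 1) ht0.le),
      mul_le_of_le_one_right (by linarith : (0:ℝ) ≤ C - 1) ht1.le]
  set x := boostMap s l (t • m) with hxdef
  have hx : x = (A / D) • l + (t / D) • m := by
    rw [hxdef, boostMap, hinner, ← hDdef, hAdef]
    field_simp
    module
  have hlm : (⟪l, m⟫ : ℝ) = c := by rw [real_inner_comm]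
  clear_value x A D c C S
  -- norm of x
  have hxnorm : ‖x‖ ^ 2 = (A ^ 2 + 2 * A * t * c + t ^ 2) / D ^ 2 := by
    rw [hx, norm_add_sq_real, real_inner_smul_left, real_inner_smul_right,
      norm_smul, norm_smul, Real.norm_eq_abs, Real.norm_eq_abs, hl, hm1, hlm]
    rw [mul_one, mul_one, sq_abs, sq_abs]
    field_simp
  have hkey : A ^ 2 + 2 * A * t * c + t ^ 2 = D ^ 2 - (1 - t ^ 2) := by
    rw [hAdef, hDdef]
    linear_combination (-(1 - (t * c) ^ 2)) * hsq
  have hxlt : ‖x‖ < 1 := by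
    have h2 : ‖x‖ ^ 2 < 1 := by
      rw [hxnorm, hkey, div_lt_one (by positivity)]
      nlinarith
    nlinarith [norm_nonneg x]
  have hxne : x ≠ 0 := by
    intro h0
    have hAt : A • l + t • m = 0 := by
      have h1 := hx
      rw [h0] at h1
      have h2 : D • ((A / D) • l + (t / D) • m) = D • (0 : E3) := by rw [← h1]
      rw [smul_zero, smul_add, smul_smul, smul_smul,
        mul_div_cancel₀ _ hDne, mul_div_cancel₀ _ hDne] at h2
      exact h2
    have h5 : t • m = -(A • l) := eq_neg_of_add_eq_zero_right hAt
    have hml : m = -((A / t) • l) := by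
      have h3 : (t⁻¹ * t) • m = t⁻¹ • -(A • l) := by rw [← smul_smul, h5]
      rw [inv_mul_cancel₀ (ne_of_gt ht0), one_smul] at h3
      rw [h3, div_eq_inv_mul]; module
    have hAeq : A = t := by
      have h6 := hL m hm
      rw [hml, norm_neg, norm_smul, hl, Real.norm_eq_abs,
        abs_of_nonneg (by positivity : (0:ℝ) ≤ A / t), mul_one] at h6
      field_simp at h6
      linarith
    have hmneg : m = -l := by
      rw [hml, hAeq, div_self (ne_of_gt ht0), one_smul]
    have h1 : ((1:ℝ)/2) • l ∈ segCone 0 L := mem_segCone_zero hlL (by norm_num)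
    have h2 : ((1:ℝ)/2) • m ∈ segCone 0 L := mem_segCone_zero hm (by norm_num)
    have h0mem : (0 : E3) ∈ segCone 0 L := by
      have h7 := hconv h1 h2 (by norm_num : (0:ℝ) ≤ 1/2) (by norm_num : (0:ℝ) ≤ 1/2)
        (by norm_num)
      rw [hmneg] at h7
      convert h7 using 1
      module
    exact zero_not_mem_segCone hL h0mem
  have hxpos : 0 < ‖x‖ := norm_pos_iff.mpr hxne
  -- now the convexity argument
  set r : ℝ := A / D + t / D with hrdef
  clear_value r
  have hr : 0 < r := by
    have h8 : 0 < t / D := div_pos ht0 hD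
    have h9 : 0 ≤ A / D := div_nonneg hA hD.le
    rw [hrdef]; linarith
  have hrne : r ≠ 0 := ne_of_gt hr
  set p : E3 := (1 / (2 * r)) • x with hpdef
  clear_value p
  have hpmem : p ∈ segCone 0 L := by
    have h1 : ((1:ℝ)/2) • l ∈ segCone 0 L := mem_segCone_zero hlL (by norm_num)
    have h2 : ((1:ℝ)/2) • m ∈ segCone 0 L := mem_segCone_zero hm (by norm_num)
    have hsum : A / D / r + t / D / r = 1 := by
      rw [← add_div, ← hrdef, div_self hrne]
    have h10 := hconv h1 h2 (by positivity : (0:ℝ) ≤ A / D / r)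
      (by positivity : (0:ℝ) ≤ t / D / r) hsum
    convert h10 using 1
    rw [hpdef, hx]
    module
  obtain ⟨m', hm', t', ht', hp⟩ := hpmem
  rw [zero_add, sub_zero] at hp
  have hpt' : t' = ‖x‖ / (2 * r) := by
    have h11 : ‖p‖ = t' := by
      rw [hp, norm_smul, hL m' hm', Real.norm_eq_abs, abs_of_pos ht'.1, mul_one]
    rw [← h11, hpdef, norm_smul, Real.norm_eq_abs,
      abs_of_pos (by positivity : (0:ℝ) < 1 / (2 * r))]
    ring
  refine ⟨m', hm', ‖x‖, ⟨hxpos, hxlt⟩, ?_⟩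
  rw [zero_add, sub_zero]
  have h12 : x = (2 * r) • p := by
    rw [hpdef, smul_smul, mul_one_div, div_self (by positivity : (2:ℝ) * r ≠ 0),
      one_smul]
  have hcoef : 2 * r * (‖x‖ / (2 * r)) = ‖x‖ := by field_simp
  conv_lhs => rw [h12, hp]
  rw [smul_smul, hpt', hcoef]

/-- For `s ≥ 0` the induced boost in direction `l` maps a truncated cone `K` with apex
`0` and boundary set `L ∋ l` into itself; the apex is moved to `tanh(s)·l ∈ K`
(Fact A.11, core computation). -/
theorem stmt14 (s : ℝ) (hs : 0 ≤ s) (l : E3) (hl : ‖l‖ = 1)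
    (L : Set E3) (hL : ∀ m ∈ L, ‖m‖ = 1) (hlL : l ∈ L)
    (hK : IsTruncCone (segCone 0 L)) :
    (boostMap s l '' segCone 0 L ⊆ segCone 0 L) ∧
    boostMap s l 0 = Real.tanh s • l ∧
    (0 < s → Real.tanh s • l ∈ segCone 0 L) := by
  obtain ⟨-, hconv, -⟩ := hK
  refine ⟨?_, ?_, ?_⟩
  · rintro x ⟨v, ⟨m, hm, t, ht, rfl⟩, rfl⟩
    rw [zero_add, sub_zero]
    exact boost_mem s hs l hl L hL hlL hconv hm ht
  · rw [boostMap]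
    simp [Real.tanh_eq_sinh_div_cosh, smul_smul, div_eq_inv_mul]
  · intro hspos
    refine ⟨l, hlL, Real.tanh s, ⟨?_, ?_⟩, by simp⟩
    · rw [Real.tanh_eq_sinh_div_cosh]
      exact div_pos (Real.sinh_pos_iff.mpr hspos) (Real.cosh_pos s)
    · rw [Real.tanh_eq_sinh_div_cosh]
      exact (div_lt_one (Real.cosh_pos s)).mpr (Real.sinh_lt_cosh s)
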